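/- Let (Ω, d) be a metric space, R a binary relation on Ω, and S : Ω → Ω a map such that: (i) every R-preserving Cauchy sequence in Ω converges (Ω is d-R-complete); (ii) R is S-closed, i.e., (x,y) ∈ R implies (Sx, Sy) ∈ R; (iii) there exists r₀ ∈ Ω with (r₀, S r₀) ∈ R; (iv) either S is d-R-continuous (for every R-preserving sequence {rₙ} converging to r, {S rₙ} converges to S r) or R is d-self-closed (for every R-preserving convergent sequence {rₙ} with limit r there is a subsequence {r_{n_l}} with (r_{n_l}, r) ∈ R for all l); (v) there exists α ∈ (0,1) with d(Sx, Sy) ≤ α d(x,y) for all (x,y) ∈ R. Then S has a fixed point, and for each r₀ ∈ Ω with (r₀, S r₀) ∈ R the Picard sequence {Sⁿ r₀} converges to a fixed point of S. -/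

import Mathlib

open Filter

/-- Relation-theoretic Banach contraction principle in a metric space
(Alam–Imdad): existence of a fixed point and convergence of Picard sequences
started at points `r₀` with `(r₀, S r₀) ∈ R`. -/
theorem metric_relational_BCP {Ω : Type*} [MetricSpace Ω]
    (R : Ω → Ω → Prop) (S : Ω → Ω)
    -- (i) Ω is d-R-complete
    (hcomplete : ∀ r : ℕ → Ω, (∀ n, R (r n) (r (n + 1))) → CauchySeq r →
      ∃ x : Ω, Tendsto r atTop (nhds x))
    -- (ii) R is S-closed
    (hSclosed : ∀ x y : Ω, R x y → R (S x) (S y))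
    -- (iii) Ω(S; R) is nonempty
    (hnonempty : ∃ r₀ : Ω, R r₀ (S r₀))
    -- (iv) S is d-R-continuous or R is d-self-closed
    (hiv : (∀ (r : ℕ → Ω) (x : Ω), (∀ n, R (r n) (r (n + 1))) →
        Tendsto r atTop (nhds x) →
        Tendsto (fun n => S (r n)) atTop (nhds (S x))) ∨
      (∀ (r : ℕ → Ω) (x : Ω), (∀ n, R (r n) (r (n + 1))) →
        Tendsto r atTop (nhds x) →
        ∃ φ : ℕ → ℕ, StrictMono φ ∧ ∀ l : ℕ, R (r (φ l)) x))
    -- (v) S is an R-preserving contraction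
    (α : ℝ) (hα : α ∈ Set.Ioo (0 : ℝ) 1)
    (hcontr : ∀ x y : Ω, R x y → dist (S x) (S y) ≤ α * dist x y) :
    (∃ x : Ω, S x = x) ∧
      ∀ r₀ : Ω, R r₀ (S r₀) → ∃ x : Ω, S x = x ∧
        Tendsto (fun n => S^[n] r₀) atTop (nhds x) := by
  obtain ⟨hα0, hα1⟩ := hα
  have main : ∀ r₀ : Ω, R r₀ (S r₀) → ∃ x : Ω, S x = x ∧
      Tendsto (fun n => S^[n] r₀) atTop (nhds x) := by
    intro r₀ h₀
    set r : ℕ → Ω := fun n => S^[n] r₀ with hr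
    have hsucc : ∀ n, r (n + 1) = S (r n) := by
      intro n; simp [hr, Function.iterate_succ_apply']
    have hR : ∀ n, R (r n) (r (n + 1)) := by
      intro n
      induction n with
      | zero => simpa [hr] using h₀
      | succ k ih => rw [hsucc, hsucc]; exact hSclosed _ _ ih
    have hdist : ∀ n, dist (r n) (r (n + 1)) ≤ dist r₀ (S r₀) * α ^ n := by
      intro n
      induction n with
      | zero => simp [hr]
      | succ k ih =>
        rw [hsucc, hsucc]
        calc dist (S (r k)) (S (r (k + 1))) ≤ α * dist (r k) (r (k + 1)) := by
              exact hcontr _ _ (hR k)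
          _ ≤ α * (dist r₀ (S r₀) * α ^ k) := by
              exact mul_le_mul_of_nonneg_left ih hα0.le
          _ = dist r₀ (S r₀) * α ^ (k + 1) := by ring
    have hcauchy : CauchySeq r := cauchySeq_of_le_geometric α _ hα1 hdist
    obtain ⟨x, hx⟩ := hcomplete r hR hcauchy
    have hshift : Tendsto (fun n => r (n + 1)) atTop (nhds x) :=
      hx.comp (tendsto_add_atTop_nat 1)
    have hfix : S x = x := by
      rcases hiv with hcont | hclosed
      · have h1 : Tendsto (fun n => S (r n)) atTop (nhds (S x)) :=
          hcont r x hR hx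
        have h2 : Tendsto (fun n => S (r n)) atTop (nhds x) := by
          simpa [hsucc] using hshift
        exact tendsto_nhds_unique h1 h2
      · obtain ⟨φ, hφ, hRφ⟩ := hclosed r x hR hx
        have hxl : Tendsto (fun l => r (φ l)) atTop (nhds x) :=
          hx.comp hφ.tendsto_atTop
        have hd0 : Tendsto (fun l => dist (S (r (φ l))) (S x)) atTop (nhds 0) := by
          apply squeeze_zero (fun l => dist_nonneg)
            (fun l => hcontr _ _ (hRφ l))
          have : Tendsto (fun l => dist (r (φ l)) x) atTop (nhds 0) :=
            tendsto_iff_dist_tendsto_zero.mp hxl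
          simpa using this.const_mul α
        have h1 : Tendsto (fun l => S (r (φ l))) atTop (nhds (S x)) :=
          tendsto_iff_dist_tendsto_zero.mpr (by simpa using hd0)
        have h2 : Tendsto (fun l => S (r (φ l))) atTop (nhds x) := by
          have := hshift.comp hφ.tendsto_atTop
          simpa [hsucc, Function.comp_def] using this
        exact tendsto_nhds_unique h1 h2
    exact ⟨x, hfix, hx⟩
  obtain ⟨r₀, h₀⟩ := hnonempty
  obtain ⟨x, hxfix, _⟩ := main r₀ h₀
  exact ⟨⟨x, hxfix⟩, main⟩
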